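/- Let μ, θ, θ̃ be closed Lagrangian subspaces with θ∩μ = θ̃∩μ = {0} and θ, θ̃ almost coinciding. Then det_F{(P(θ)−P(μ))(P(θ̃)−P(μ))^{-1}} = det_F{(P(θ)+P(μ))(P(θ̃)+P(μ))^{-1}}, where P denotes orthogonal projection and both operators inside det_F differ from Id by trace class (indeed finite rank) operators. -/

import Mathlib

set_option linter.unusedSectionVars false


open Module RealInnerProductSpace

variable {H : Type*} [NormedAddCommGroup H] [InnerProductSpace ℝ H] [CompleteSpace H]

/-- A closed Lagrangian subspace of the real symplectic Hilbert space `H` with symplectic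
form `ω(x,y) = ⟪J x, y⟫`: a closed subspace which equals its own `ω`-annihilator. -/
def IsLagrangian (J : H →L[ℝ] H) (lam : Submodule ℝ H) : Prop :=
  IsClosed (lam : Set H) ∧ ∀ x : H, x ∈ lam ↔ ∀ y ∈ lam, ⟪J x, y⟫ = 0

/-- The pair `(lam, mu)` is a Fredholm pair of subspaces. -/
def IsFredholmPair (lam mu : Submodule ℝ H) : Prop :=
  FiniteDimensional ℝ ↥(lam ⊓ mu) ∧ IsClosed ((lam ⊔ mu : Submodule ℝ H) : Set H) ∧
    FiniteDimensional ℝ (H ⧸ (lam ⊔ mu))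

/-- A bounded real-linear operator is Fredholm. -/
def IsFredholmR (T : H →L[ℝ] H) : Prop :=
  FiniteDimensional ℝ (LinearMap.ker (T : H →ₗ[ℝ] H)) ∧ IsClosed (LinearMap.range (T : H →ₗ[ℝ] H) : Set H) ∧
    FiniteDimensional ℝ (H ⧸ LinearMap.range (T : H →ₗ[ℝ] H))

/-- The orthogonal projection onto a closed subspace, as an operator `H → H`. -/
noncomputable def projCLM (lam : Submodule ℝ H) [CompleteSpace lam] : H →L[ℝ] H :=
  lam.subtypeL.comp lam.orthogonalProjectionOnto

/-- The conjugation `τ_λ = 2P(λ) − Id` determined by the real structure `λ`. -/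
noncomputable def conjOf (lam : Submodule ℝ H) [CompleteSpace lam] : H →L[ℝ] H :=
  (2 : ℝ) • projCLM lam - 1

lemma projCLM_apply (lam : Submodule ℝ H) [CompleteSpace lam] (x : H) :
    projCLM lam x = (lam.orthogonalProjectionOnto x : H) := rfl

lemma projCLM_mem (lam : Submodule ℝ H) [CompleteSpace lam] (x : H) :
    projCLM lam x ∈ lam := (lam.orthogonalProjectionOnto x).2

lemma projCLM_of_mem (lam : Submodule ℝ H) [CompleteSpace lam] {x : H} (hx : x ∈ lam) :
    projCLM lam x = x := by
  have h := Submodule.orthogonalProjectionOnto_mem_subspace_eq_self (K := lam) ⟨x, hx⟩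
  simpa [projCLM_apply] using congrArg (Subtype.val) h

lemma projCLM_idem (lam : Submodule ℝ H) [CompleteSpace lam] :
    projCLM lam * projCLM lam = projCLM lam := by
  ext x
  simp [ContinuousLinearMap.mul_apply, projCLM_of_mem lam (projCLM_mem lam x)]

lemma fr_mul_right (f g : H →L[ℝ] H) (hf : FiniteDimensional ℝ (LinearMap.range (f : H →ₗ[ℝ] H))) :
    FiniteDimensional ℝ (LinearMap.range ((f * g : H →L[ℝ] H) : H →ₗ[ℝ] H)) := by
  haveI := hf
  apply Submodule.finiteDimensional_of_le (S₂ := LinearMap.range (f : H →ₗ[ℝ] H))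
  rintro x hx
  obtain ⟨y, rfl⟩ := LinearMap.mem_range.mp hx
  exact LinearMap.mem_range.mpr ⟨g y, rfl⟩

lemma fr_mul_left (f g : H →L[ℝ] H) (hf : FiniteDimensional ℝ (LinearMap.range (f : H →ₗ[ℝ] H))) :
    FiniteDimensional ℝ (LinearMap.range ((g * f : H →L[ℝ] H) : H →ₗ[ℝ] H)) := by
  haveI := hf
  haveI : Module.Finite ℝ ((LinearMap.range (f : H →ₗ[ℝ] H)).map (g : H →ₗ[ℝ] H)) := Module.Finite.map _ _
  apply Submodule.finiteDimensional_of_le (S₂ := (LinearMap.range (f : H →ₗ[ℝ] H)).map (g : H →ₗ[ℝ] H))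
  rintro x hx
  obtain ⟨y, rfl⟩ := LinearMap.mem_range.mp hx
  exact Submodule.mem_map.mpr ⟨f y, LinearMap.mem_range.mpr ⟨y, rfl⟩, rfl⟩

lemma fr_sub (f g : H →L[ℝ] H) (hf : FiniteDimensional ℝ (LinearMap.range (f : H →ₗ[ℝ] H)))
    (hg : FiniteDimensional ℝ (LinearMap.range (g : H →ₗ[ℝ] H))) :
    FiniteDimensional ℝ (LinearMap.range ((f - g : H →L[ℝ] H) : H →ₗ[ℝ] H)) := by
  haveI := hf; haveI := hg
  apply Submodule.finiteDimensional_of_le (S₂ := LinearMap.range (f : H →ₗ[ℝ] H) ⊔ LinearMap.range (g : H →ₗ[ℝ] H))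
  rintro x hx
  obtain ⟨y, rfl⟩ := LinearMap.mem_range.mp hx
  have : (f - g) y = f y - g y := by simp
  rw [ContinuousLinearMap.coe_coe, this]
  exact Submodule.sub_mem _ (Submodule.mem_sup_left (LinearMap.mem_range.mpr ⟨y, rfl⟩))
    (Submodule.mem_sup_right (LinearMap.mem_range.mpr ⟨y, rfl⟩))

lemma proj_inv_proj_eq_zero (mu th : Submodule ℝ H) [CompleteSpace mu] [CompleteSpace th]
    (htrans : th ⊓ mu = ⊥) (h : IsUnit (projCLM th + projCLM mu)) :
    projCLM th * Ring.inverse (projCLM th + projCLM mu) * projCLM mu = 0 := by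
  ext x
  have hB : ∀ y : H, projCLM th (Ring.inverse (projCLM th + projCLM mu) y)
      + projCLM mu (Ring.inverse (projCLM th + projCLM mu) y) = y := by
    intro y
    have h2 := congrArg (fun f : H →L[ℝ] H => f y) (Ring.mul_inverse_cancel _ h)
    simpa [ContinuousLinearMap.mul_apply] using h2
  set m := projCLM mu x with hm
  set u := Ring.inverse (projCLM th + projCLM mu) m with hu
  have hmem : projCLM th u ∈ th ⊓ mu := by
    refine ⟨projCLM_mem _ _, ?_⟩
    have h3 : projCLM th u = m - projCLM mu u := by
      have h4 := hB m; rw [← hu] at h4; exact eq_sub_of_add_eq h4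
    rw [h3]
    exact Submodule.sub_mem _ (projCLM_mem mu x) (projCLM_mem _ _)
  rw [htrans, Submodule.mem_bot] at hmem
  simpa [ContinuousLinearMap.mul_apply] using hmem

lemma proj_diff_finrank (theta theta' : Submodule ℝ H) [CompleteSpace theta] [CompleteSpace theta']
    (h1 : FiniteDimensional ℝ (theta ⧸ ((theta ⊓ theta').comap theta.subtype)))
    (h2 : FiniteDimensional ℝ (theta' ⧸ ((theta ⊓ theta').comap theta'.subtype))) :
    FiniteDimensional ℝ (LinearMap.range ((projCLM theta - projCLM theta' : H →L[ℝ] H) : H →ₗ[ℝ] H)) := by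
  set nu := theta ⊓ theta' with hnu
  have hclosed : IsClosed (nu : Set H) := by
    rw [hnu, Submodule.coe_inf]
    exact ((completeSpace_coe_iff_isComplete.mp ‹_›).isClosed).inter
      ((completeSpace_coe_iff_isComplete.mp ‹_›).isClosed)
  haveI : CompleteSpace nu := hclosed.completeSpace_coe
  -- W finite-dimensional
  have hWfin : ∀ (th : Submodule ℝ H),
      FiniteDimensional ℝ (th ⧸ (nu.comap th.subtype)) →
      FiniteDimensional ℝ ↥(th ⊓ nuᗮ) := by
    intro th hfin
    haveI := hfin
    set f : ↥(th ⊓ nuᗮ) →ₗ[ℝ] th ⧸ (nu.comap th.subtype) :=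
      (nu.comap th.subtype).mkQ.comp (Submodule.inclusion inf_le_left) with hf
    apply FiniteDimensional.of_injective f
    intro a b hab
    have h4 : Submodule.inclusion (inf_le_left : th ⊓ nuᗮ ≤ th) (a - b)
        ∈ nu.comap th.subtype := by
      rw [← Submodule.Quotient.mk_eq_zero]
      have : f (a - b) = 0 := by rw [map_sub, hab, sub_self]
      simpa [hf, Submodule.mkQ_apply] using this
    have h5 : ((a : H) - (b : H)) ∈ nu := by
      simpa [Submodule.mem_comap] using h4
    have h6 : ((a : H) - (b : H)) ∈ nuᗮ := Submodule.sub_mem _ a.2.2 b.2.2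
    have h7 : ((a : H) - (b : H)) = 0 := by
      have := h6 _ h5
      rwa [real_inner_comm, inner_self_eq_zero] at this
    exact Subtype.ext (sub_eq_zero.mp h7)
  haveI hW1 : FiniteDimensional ℝ ↥(theta ⊓ nuᗮ) := hWfin theta h1
  haveI hW2 : FiniteDimensional ℝ ↥(theta' ⊓ nuᗮ) := hWfin theta' h2
  have hkey : ∀ (th : Submodule ℝ H) [CompleteSpace th], nu ≤ th →
      ∀ x : H, projCLM th x - projCLM nu x ∈ th ⊓ nuᗮ := by
    intro th _ hle x
    refine Submodule.mem_inf.mpr ⟨Submodule.sub_mem _ (projCLM_mem _ _) (hle (projCLM_mem _ _)), ?_⟩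
    rw [Submodule.mem_orthogonal]
    intro n hn
    have e1 : ⟪x - projCLM th x, n⟫ = 0 := by
      rw [projCLM_apply]; exact Submodule.starProjection_inner_eq_zero (K := th) x n (hle hn)
    have e2 : ⟪x - projCLM nu x, n⟫ = 0 := by
      rw [projCLM_apply]; exact Submodule.starProjection_inner_eq_zero (K := nu) x n hn
    rw [inner_sub_left] at e1 e2
    rw [real_inner_comm, inner_sub_left]
    linarith
  apply Submodule.finiteDimensional_of_le (S₂ := (theta ⊓ nuᗮ) ⊔ (theta' ⊓ nuᗮ))
  rintro z hz
  obtain ⟨x, rfl⟩ := LinearMap.mem_range.mp hz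
  have e3 : (projCLM theta - projCLM theta') x
      = (projCLM theta x - projCLM nu x) - (projCLM theta' x - projCLM nu x) := by
    simp only [ContinuousLinearMap.sub_apply]; abel
  rw [ContinuousLinearMap.coe_coe, e3]
  exact Submodule.sub_mem _
    (Submodule.mem_sup_left (hkey theta inf_le_left x))
    (Submodule.mem_sup_right (hkey theta' inf_le_right x))

/-- Let `μ, θ, θ̃` be closed Lagrangian subspaces with `θ∩μ = θ̃∩μ = {0}` and `θ, θ̃` almost
coinciding.  Then `det_F{(P(θ)−P(μ))(P(θ̃)−P(μ))⁻¹} = det_F{(P(θ)+P(μ))(P(θ̃)+P(μ))⁻¹}`,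
where `P` denotes orthogonal projection, and both operators inside `det_F` differ from `Id`
by finite rank (in particular trace class) operators.  Here `det_F` is any function behaving
like the Fredholm determinant: it is multiplicative on operators `Id + finite rank`,
invariant under conjugation, and agrees with the finite dimensional determinant on invariant
finite dimensional subspaces containing the range. -/
theorem detF_transition_functions_agree
    (J : H →L[ℝ] H) (hJ2 : J ∘L J = -1)
    (hJorth : ∀ x y : H, ⟪J x, J y⟫ = ⟪x, y⟫)
    (detF : (H →L[ℝ] H) → ℝ)
    (hmul : ∀ K K' : H →L[ℝ] H, FiniteDimensional ℝ (LinearMap.range (K : H →ₗ[ℝ] H)) →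
      FiniteDimensional ℝ (LinearMap.range (K' : H →ₗ[ℝ] H)) →
      detF ((1 + K) * (1 + K')) = detF (1 + K) * detF (1 + K'))
    (hconj : ∀ (K S : H →L[ℝ] H), FiniteDimensional ℝ (LinearMap.range (K : H →ₗ[ℝ] H)) → IsUnit S →
      detF (S * (1 + K) * Ring.inverse S) = detF (1 + K))
    (hdet : ∀ (K : H →L[ℝ] H) (V : Submodule ℝ H), FiniteDimensional ℝ V →
      (∀ x, K x ∈ V) → ∀ hV : ∀ x ∈ V, K x ∈ V,
      detF (1 + K) = LinearMap.det (LinearMap.id + (K : H →ₗ[ℝ] H).restrict hV))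
    (mu theta theta' : Submodule ℝ H)
    (hmu : IsLagrangian J mu) (htheta : IsLagrangian J theta) (htheta' : IsLagrangian J theta')
    [CompleteSpace mu] [CompleteSpace theta] [CompleteSpace theta']
    (htrans : theta ⊓ mu = ⊥) (htrans' : theta' ⊓ mu = ⊥)
    (halmost₁ : FiniteDimensional ℝ (theta ⧸ ((theta ⊓ theta').comap theta.subtype)))
    (halmost₂ : FiniteDimensional ℝ (theta' ⧸ ((theta ⊓ theta').comap theta'.subtype)))
    (halmost₃ : Module.finrank ℝ (theta ⧸ ((theta ⊓ theta').comap theta.subtype)) =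
      Module.finrank ℝ (theta' ⧸ ((theta ⊓ theta').comap theta'.subtype)))
    (hsub : IsUnit (projCLM theta - projCLM mu)) (hsub' : IsUnit (projCLM theta' - projCLM mu))
    (hadd : IsUnit (projCLM theta + projCLM mu)) (hadd' : IsUnit (projCLM theta' + projCLM mu)) :
    FiniteDimensional ℝ (LinearMap.range
        (((projCLM theta - projCLM mu) * Ring.inverse (projCLM theta' - projCLM mu) - 1 : H →L[ℝ] H) :
          H →ₗ[ℝ] H)) ∧
      FiniteDimensional ℝ (LinearMap.range
        (((projCLM theta + projCLM mu) * Ring.inverse (projCLM theta' + projCLM mu) - 1 : H →L[ℝ] H) :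
          H →ₗ[ℝ] H)) ∧
      detF ((projCLM theta - projCLM mu) * Ring.inverse (projCLM theta' - projCLM mu)) =
        detF ((projCLM theta + projCLM mu) * Ring.inverse (projCLM theta' + projCLM mu)) := by
  have hFfin : FiniteDimensional ℝ (LinearMap.range ((projCLM theta - projCLM theta' : H →L[ℝ] H) : H →ₗ[ℝ] H)) :=
    proj_diff_finrank theta theta' halmost₁ halmost₂
  have h0 : projCLM theta * Ring.inverse (projCLM theta + projCLM mu) * projCLM mu = 0 :=
    proj_inv_proj_eq_zero mu theta htrans hadd
  have h0' : projCLM theta' * Ring.inverse (projCLM theta' + projCLM mu) * projCLM mu = 0 :=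
    proj_inv_proj_eq_zero mu theta' htrans' hadd'
  have hPm2 : projCLM mu * projCLM mu = projCLM mu := projCLM_idem mu
  set Pm := projCLM (H := H) mu with hPm
  set Pt := projCLM (H := H) theta with hPt
  set Pt' := projCLM (H := H) theta' with hPt'
  set F := Pt - Pt' with hFdef
  set A := Pt - Pm with hAdef
  set A' := Pt' - Pm with hA'def
  set B := Pt + Pm with hBdef
  set B' := Pt' + Pm with hB'def
  set C := A * Ring.inverse B with hCdef
  set C' := A' * Ring.inverse B' with hC'def
  clear_value Pm Pt Pt' F A A' B B' C C'
  have hC'unit : IsUnit C' := by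
    rw [hC'def]; exact hsub'.mul (isUnit_ringInverse.mpr hadd')
  have hiC'l : Ring.inverse C' * C' = 1 := Ring.inverse_mul_cancel _ hC'unit
  have hiC'r : C' * Ring.inverse C' = 1 := Ring.mul_inverse_cancel _ hC'unit
  -- Pm * inv B * Pm = Pm  (and primed version)
  have hPmiBPm : Pm * Ring.inverse B * Pm = Pm := by
    have e : Pm * Ring.inverse B * Pm = B * Ring.inverse B * Pm - Pt * Ring.inverse B * Pm := by
      rw [hBdef]; noncomm_ring
    rw [e, h0, Ring.mul_inverse_cancel _ hadd, one_mul, sub_zero]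
  have hPmiB'Pm : Pm * Ring.inverse B' * Pm = Pm := by
    have e : Pm * Ring.inverse B' * Pm = B' * Ring.inverse B' * Pm - Pt' * Ring.inverse B' * Pm := by
      rw [hB'def]; noncomm_ring
    rw [e, h0', Ring.mul_inverse_cancel _ hadd', one_mul, sub_zero]
  -- C * Pm = -Pm  (and primed)
  have hCPm : C * Pm = -Pm := by
    have e : C * Pm = Pt * Ring.inverse B * Pm - Pm * Ring.inverse B * Pm := by
      rw [hCdef, hAdef]; noncomm_ring
    rw [e, h0, hPmiBPm, zero_sub]
  have hC'Pm : C' * Pm = -Pm := by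
    have e : C' * Pm = Pt' * Ring.inverse B' * Pm - Pm * Ring.inverse B' * Pm := by
      rw [hC'def, hA'def]; noncomm_ring
    rw [e, h0', hPmiB'Pm, zero_sub]
  have hiC'Pm : Ring.inverse C' * Pm = -Pm := by
    have e : Ring.inverse C' * (C' * Pm) = Ring.inverse C' * (-Pm) := by rw [hC'Pm]
    rw [← mul_assoc, hiC'l, one_mul, mul_neg] at e
    rw [← neg_neg (Ring.inverse C' * Pm), ← e]
  -- (1 - Pm) * C = 1 - Pm  (and primed)
  have hQC : ∀ (X Y : H →L[ℝ] H), X = Pt ∨ X = Pt' → (1 - Pm) * (X - Pm) = (1 - Pm) * (X + Pm) := by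
    intro X Y _
    have e : (1 - Pm) * (X - Pm) - (1 - Pm) * (X + Pm) = -(Pm + Pm) + (Pm * Pm + Pm * Pm) := by
      noncomm_ring
    rw [hPm2] at e
    have e2 : (1 - Pm) * (X - Pm) - (1 - Pm) * (X + Pm) = 0 := by rw [e]; abel
    exact sub_eq_zero.mp e2
  have h1mPmC : (1 - Pm) * C = 1 - Pm := by
    calc (1 - Pm) * C = ((1 - Pm) * A) * Ring.inverse B := by rw [hCdef, mul_assoc]
    _ = ((1 - Pm) * B) * Ring.inverse B := by rw [hAdef, hBdef, hQC Pt Pt (Or.inl rfl)]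
    _ = 1 - Pm := by rw [mul_assoc, Ring.mul_inverse_cancel _ hadd, mul_one]
  have h1mPmC' : (1 - Pm) * C' = 1 - Pm := by
    calc (1 - Pm) * C' = ((1 - Pm) * A') * Ring.inverse B' := by rw [hC'def, mul_assoc]
    _ = ((1 - Pm) * B') * Ring.inverse B' := by rw [hA'def, hB'def, hQC Pt' Pt' (Or.inr rfl)]
    _ = 1 - Pm := by rw [mul_assoc, Ring.mul_inverse_cancel _ hadd', mul_one]
  set K := C * Ring.inverse C' - 1 with hKdef
  clear_value K
  have h1K : 1 + K = C * Ring.inverse C' := by rw [hKdef]; abel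
  have hKPm : K * Pm = 0 := by
    rw [hKdef, sub_mul, one_mul, mul_assoc, hiC'Pm, mul_neg, hCPm, neg_neg, sub_self]
  have h1mPmiC' : (1 - Pm) * Ring.inverse C' = 1 - Pm := by
    calc (1 - Pm) * Ring.inverse C' = ((1 - Pm) * C') * Ring.inverse C' := by
          rw [h1mPmC']
    _ = 1 - Pm := by rw [mul_assoc, hiC'r, mul_one]
  have hPmK : (1 - Pm) * K = 0 := by
    rw [hKdef, mul_sub, mul_one, ← mul_assoc, h1mPmC, h1mPmiC', sub_self]
  have hPmKK : Pm * K = K := by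
    have e : K - Pm * K = 0 := by
      have := hPmK; rwa [sub_mul, one_mul] at this
    have := sub_eq_zero.mp e; exact this.symm
  have hK2 : K * K = 0 := by
    calc K * K = K * (Pm * K) := by rw [hPmKK]
    _ = (K * Pm) * K := by rw [mul_assoc]
    _ = 0 := by rw [hKPm, zero_mul]
  -- finite rank statements
  have hKA : A * Ring.inverse A' - 1 = F * Ring.inverse A' := by
    have hF2 : F = A - A' := by rw [hFdef, hAdef, hA'def]; abel
    rw [hF2, sub_mul, Ring.mul_inverse_cancel _ hsub']
  have hKB : B * Ring.inverse B' - 1 = F * Ring.inverse B' := by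
    have hF2 : F = B - B' := by rw [hFdef, hBdef, hB'def]; abel
    rw [hF2, sub_mul, Ring.mul_inverse_cancel _ hadd']
  have goal1 : FiniteDimensional ℝ (LinearMap.range ((A * Ring.inverse A' - 1 : H →L[ℝ] H) : H →ₗ[ℝ] H)) := by
    rw [hKA]; exact fr_mul_right _ _ hFfin
  have goal2 : FiniteDimensional ℝ (LinearMap.range ((B * Ring.inverse B' - 1 : H →L[ℝ] H) : H →ₗ[ℝ] H)) := by
    rw [hKB]; exact fr_mul_right _ _ hFfin
  -- K is finite rank
  have hinvdiff : Ring.inverse B - Ring.inverse B'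
      = Ring.inverse B * ((B' - B) * Ring.inverse B') := by
    calc Ring.inverse B - Ring.inverse B'
        = Ring.inverse B * (B' * Ring.inverse B') - (Ring.inverse B * B) * Ring.inverse B' := by
          rw [Ring.mul_inverse_cancel _ hadd', mul_one, Ring.inverse_mul_cancel _ hadd, one_mul]
    _ = Ring.inverse B * ((B' - B) * Ring.inverse B') := by noncomm_ring
  have hAA' : A = A' + F := by rw [hAdef, hA'def, hFdef]; abel
  have hBB' : B' - B = -F := by rw [hBdef, hB'def, hFdef]; abel
  have hCC' : C - C' = F * Ring.inverse B - A' * (Ring.inverse B * (F * Ring.inverse B')) := by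
    have e : C - C' = A' * (Ring.inverse B - Ring.inverse B') + F * Ring.inverse B := by
      rw [hCdef, hC'def, hAA']; noncomm_ring
    rw [e, hinvdiff, hBB']; noncomm_ring
  have hKform : K = (C - C') * Ring.inverse C' := by
    rw [hKdef, sub_mul, hiC'r]
  have hKfin : FiniteDimensional ℝ (LinearMap.range (K : H →ₗ[ℝ] H)) := by
    rw [hKform, hCC']
    exact fr_mul_right _ _ (fr_sub _ _ (fr_mul_right _ _ hFfin)
      (fr_mul_left _ _ (fr_mul_left _ _ (fr_mul_right _ _ hFfin))))
  -- detF (1 + K) = 1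
  have hdet1 : detF (1 + K) = 1 := by
    have hmemV : ∀ x, K x ∈ LinearMap.range (K : H →ₗ[ℝ] H) := fun x => LinearMap.mem_range_self _ x
    have hV : ∀ x ∈ LinearMap.range (K : H →ₗ[ℝ] H), K x ∈ LinearMap.range (K : H →ₗ[ℝ] H) := fun x _ => hmemV x
    rw [hdet K _ hKfin hmemV hV]
    have hres : (K : H →ₗ[ℝ] H).restrict hV = 0 := by
      ext v
      obtain ⟨y, hy⟩ := LinearMap.mem_range.mp v.2
      have e : K (K y) = 0 := by
        have := congrArg (fun f : H →L[ℝ] H => f y) hK2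
        simpa [ContinuousLinearMap.mul_apply] using this
      have : ((K : H →ₗ[ℝ] H).restrict hV v : H) = K (v : H) := rfl
      simp only [LinearMap.zero_apply, ZeroMemClass.coe_zero]
      rw [this, ← hy]
      exact e
    rw [hres, add_zero, LinearMap.det_id]
  -- inverse of C'
  have hinvC' : Ring.inverse C' = B' * Ring.inverse A' := by
    have h3 : C' * (B' * Ring.inverse A') = 1 := by
      rw [hC'def, mul_assoc, ← mul_assoc (Ring.inverse B') B', Ring.inverse_mul_cancel _ hadd',
        one_mul, Ring.mul_inverse_cancel _ hsub']
    calc Ring.inverse C' = Ring.inverse C' * (C' * (B' * Ring.inverse A')) := by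
          rw [h3, mul_one]
    _ = (Ring.inverse C' * C') * (B' * Ring.inverse A') := by rw [mul_assoc]
    _ = B' * Ring.inverse A' := by rw [hiC'l, one_mul]
  -- main factorization
  have e1 : (1 : H →L[ℝ] H) + C' * (B * Ring.inverse B' - 1) * Ring.inverse C'
      = C' * (B * Ring.inverse B') * Ring.inverse C' := by
    have e : C' * (B * Ring.inverse B' - 1) * Ring.inverse C'
        = C' * (B * Ring.inverse B') * Ring.inverse C' - C' * Ring.inverse C' := by noncomm_ring
    rw [e, hiC'r]; abel
  have hmain : A * Ring.inverse A'
      = (1 + K) * (1 + C' * (B * Ring.inverse B' - 1) * Ring.inverse C') := by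
    rw [h1K, e1]
    calc A * Ring.inverse A'
        = A * (Ring.inverse B' * (B' * Ring.inverse A')) := by
          rw [← mul_assoc (Ring.inverse B') B' (Ring.inverse A'),
            Ring.inverse_mul_cancel _ hadd', one_mul]
    _ = A * (Ring.inverse B' * Ring.inverse C') := by rw [hinvC']
    _ = A * ((Ring.inverse B * B) * (Ring.inverse B' * Ring.inverse C')) := by
          rw [Ring.inverse_mul_cancel _ hadd, one_mul]
    _ = C * ((B * Ring.inverse B') * Ring.inverse C') := by rw [hCdef]; noncomm_ring
    _ = C * ((Ring.inverse C' * C') * ((B * Ring.inverse B') * Ring.inverse C')) := by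
          rw [hiC'l, one_mul]
    _ = (C * Ring.inverse C') * (C' * (B * Ring.inverse B') * Ring.inverse C') := by
          noncomm_ring
  -- conjugation step
  have hconjK₂ : detF (C' * (B * Ring.inverse B') * Ring.inverse C') = detF (B * Ring.inverse B') := by
    have h4 := hconj (B * Ring.inverse B' - 1) C' goal2 hC'unit
    have e0 : (1 : H →L[ℝ] H) + (B * Ring.inverse B' - 1) = B * Ring.inverse B' := by abel
    rwa [e0] at h4
  refine ⟨goal1, goal2, ?_⟩
  calc detF (A * Ring.inverse A')
      = detF ((1 + K) * (1 + C' * (B * Ring.inverse B' - 1) * Ring.inverse C')) := by rw [hmain]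
  _ = detF (1 + K) * detF (1 + C' * (B * Ring.inverse B' - 1) * Ring.inverse C') :=
      hmul _ _ hKfin (fr_mul_right _ _ (fr_mul_left _ _ goal2))
  _ = 1 * detF (C' * (B * Ring.inverse B') * Ring.inverse C') := by rw [hdet1, e1]
  _ = detF (B * Ring.inverse B') := by rw [hconjK₂, one_mul]
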